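/- Let H : ℝ → ℝ be continuous and coercive and F0 : ℝ → ℝ be continuous, non-increasing and semi-coercive. Then the sub-relaxation R̲F0 and the super-relaxation R̄F0 are continuous, non-increasing and semi-coercive; they satisfy the pointwise inequalities min(F0, H) ≤ R̲F0 ≤ F0 ≤ R̄F0 ≤ max(F0, H); and both operators are idempotent: R̲(R̲F0) = R̲F0 and R̄(R̄F0) = R̄F0. -/

import Mathlib

open Set Filter

attribute [local instance] Classical.propDecidable

noncomputable section

/-- `H` is coercive: `H p → +∞` as `|p| → +∞`. -/
def Coercive (H : ℝ → ℝ) : Prop := Tendsto H (cocompact ℝ) atTop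

/-- `F` is semi-coercive: `F p → +∞` as `p → -∞`. -/
def SemiCoercive (F : ℝ → ℝ) : Prop := Tendsto F atBot atTop

/-- Sub-relaxation: `(R̲F)(p) = sup_{q ≥ p} min (F q) (H q)`. -/
def subR (H F : ℝ → ℝ) (p : ℝ) : ℝ := sSup ((fun q => min (F q) (H q)) '' Ici p)

/-- Super-relaxation: `(R̄F)(p) = inf_{q ≤ p} max (F q) (H q)`. -/
def supR (H F : ℝ → ℝ) (p : ℝ) : ℝ := sInf ((fun q => max (F q) (H q)) '' Iic p)

/-- Relaxation operator: `R̲F` where `F ≥ H`, `R̄F` where `F ≤ H`. -/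
def relax (H F : ℝ → ℝ) (p : ℝ) : ℝ := if H p ≤ F p then subR H F p else supR H F p

/-- `p` is a negative characteristic point of `F` relative to `H`. -/
def negChar (H F : ℝ → ℝ) (p : ℝ) : Prop :=
  H p = F p ∧ ∃ ε > 0, ∀ q ∈ Ioo (p - ε) p, H q < H p

/-- `p` is a positive characteristic point of `F` relative to `H`. -/
def posChar (H F : ℝ → ℝ) (p : ℝ) : Prop :=
  H p = F p ∧ ∃ ε > 0, ∀ q ∈ Ioo p (p + ε), H p < H q

/-- The upper point `p⁺ ∈ ℝ ∪ {+∞}` associated with `p` and `H`. -/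
def upperPt (H : ℝ → ℝ) (p : ℝ) : EReal :=
  if ∀ ε > 0, ∃ q, p < q ∧ q < p + ε ∧ H q ≤ H p then (p : EReal)
  else sSup ((fun q : ℝ => (q : EReal)) '' {q : ℝ | p < q ∧ ∀ r ∈ Ioo p q, H p < H r})

/-- The lower point `p⁻` associated with `p` and `H`. -/
def lowerPt (H : ℝ → ℝ) (p : ℝ) : ℝ :=
  if ∀ ε > 0, ∃ q, p - ε < q ∧ q < p ∧ H p ≤ H q then p
  else sInf {q : ℝ | q < p ∧ ∀ r ∈ Ioo q p, H r < H p}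

/-- `p` is a positive limiter point of `F`. -/
def posLimiter (H F : ℝ → ℝ) (p : ℝ) : Prop :=
  (p : EReal) < upperPt H p ∧ F p ≤ H p ∧
    ∀ q : ℝ, H q < H p → F q ≤ H q →
      {r : ℝ | lowerPt H q < r ∧ (r : EReal) < upperPt H q} ∩
        {r : ℝ | p < r ∧ (r : EReal) < upperPt H p} = ∅

/-- `p` is a negative limiter point of `F`. -/
def negLimiter (H F : ℝ → ℝ) (p : ℝ) : Prop :=
  lowerPt H p < p ∧ H p ≤ F p ∧
    ∀ q : ℝ, H q ≤ F q → H p < H q →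
      {r : ℝ | lowerPt H q < r ∧ (r : EReal) < upperPt H q} ∩ Ioo (lowerPt H p) p = ∅

/-- The Godunov flux associated with `H`. -/
def godunov (H : ℝ → ℝ) (q p : ℝ) : ℝ :=
  if p ≤ q then sSup (H '' Icc p q) else sInf (H '' Icc q p)

/-- The lower (set-valued) Godunov semi-flux `G̲(q,p)`, as a subset of the extended reals. -/
def subG (H : ℝ → ℝ) (q p : ℝ) : Set EReal :=
  if q < p then {⊥}
  else if q = p then Iic ((H p : ℝ) : EReal)
  else {((godunov H q p : ℝ) : EReal)}

/-- The upper (set-valued) Godunov semi-flux `Ḡ(q,p)`, as a subset of the extended reals. -/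
def supG (H : ℝ → ℝ) (q p : ℝ) : Set EReal :=
  if q < p then {((godunov H q p : ℝ) : EReal)}
  else if q = p then Ici ((H p : ℝ) : EReal)
  else {⊤}


section SubRHelpers
variable {H F : ℝ → ℝ}

lemma subR_nonempty (H F : ℝ → ℝ) (p : ℝ) :
    ((fun q => min (F q) (H q)) '' Ici p).Nonempty :=
  ⟨_, ⟨p, self_mem_Ici, rfl⟩⟩

lemma subR_bdd (hFa : Antitone F) (p : ℝ) :
    BddAbove ((fun q => min (F q) (H q)) '' Ici p) := by
  refine ⟨F p, ?_⟩
  rintro x ⟨q, hq, rfl⟩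
  exact (min_le_left _ _).trans (hFa hq)

lemma subR_le_F (hFa : Antitone F) (p : ℝ) : subR H F p ≤ F p := by
  refine csSup_le (subR_nonempty H F p) ?_
  rintro x ⟨q, hq, rfl⟩
  exact (min_le_left _ _).trans (hFa hq)

lemma min_le_subR (hFa : Antitone F) {p q : ℝ} (hq : p ≤ q) :
    min (F q) (H q) ≤ subR H F p :=
  le_csSup (subR_bdd hFa p) ⟨q, hq, rfl⟩

lemma subR_anti (hFa : Antitone F) : Antitone (subR H F) := fun p p' h =>
  csSup_le_csSup (subR_bdd hFa p) (subR_nonempty H F p')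
    (image_mono (Ici_subset_Ici.2 h))

lemma subR_cont (hH : Continuous H) (hF : Continuous F) (hFa : Antitone F) :
    Continuous (subR H F) := by
  have hgc : Continuous fun q => min (F q) (H q) := hF.min hH
  rw [Metric.continuous_iff]
  intro p ε hε
  obtain ⟨δ₁, hδ₁, hg₁⟩ := Metric.continuousAt_iff.1 hgc.continuousAt (ε/4) (by linarith)
  have h₁ : subR H F (p - δ₁/2) ≤ subR H F p + ε/2 := by
    refine csSup_le (subR_nonempty _ _ _) ?_
    rintro x ⟨q, hq, rfl⟩
    rcases le_or_gt p q with h | h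
    · have := min_le_subR (H := H) hFa h
      linarith
    · have hd : dist q p < δ₁ := by
        simp only [mem_Ici] at hq
        rw [Real.dist_eq, abs_lt]; constructor <;> linarith
      have := hg₁ hd
      rw [Real.dist_eq, abs_lt] at this
      have h2 : min (F p) (H p) ≤ subR H F p := min_le_subR hFa le_rfl
      linarith [this.2]
  obtain ⟨x, ⟨qs, hqs, rfl⟩, hx⟩ :=
    exists_lt_of_lt_csSup (subR_nonempty H F p)
      (show subR H F p - ε/4 < subR H F p by linarith)
  obtain ⟨η, hη, hg₂⟩ := Metric.continuousAt_iff.1 (hgc.continuousAt (x := qs)) (ε/4) (by linarith)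
  obtain ⟨q', hq'⟩ : ∃ q', q' = qs + η/2 := ⟨_, rfl⟩
  have hδ₂ : 0 < q' - p := by
    simp only [mem_Ici] at hqs; rw [hq']; linarith
  have h₂ : subR H F p - ε/2 ≤ subR H F q' := by
    have hd : dist q' qs < η := by
      rw [Real.dist_eq, abs_lt]; rw [hq']; constructor <;> linarith
    have := hg₂ hd
    rw [Real.dist_eq, abs_lt] at this
    have h3 : min (F q') (H q') ≤ subR H F q' := min_le_subR hFa le_rfl
    linarith [this.1]
  refine ⟨min (δ₁/2) (q' - p), lt_min (by linarith) hδ₂, fun a ha => ?_⟩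
  rw [Real.dist_eq, abs_lt] at ha
  have ha1 : p - δ₁/2 ≤ a := by
    have := ha.1; have := min_le_left (δ₁/2) (q' - p); linarith
  have ha2 : a ≤ q' := by
    have := ha.2; have := min_le_right (δ₁/2) (q' - p); linarith
  have l1 : subR H F a ≤ subR H F (p - δ₁/2) := subR_anti hFa ha1
  have l2 : subR H F q' ≤ subR H F a := subR_anti hFa ha2
  rw [Real.dist_eq, abs_lt]
  constructor <;> linarith

lemma subR_semi (hH' : Tendsto H atBot atTop) (hFs : Tendsto F atBot atTop)
    (hFa : Antitone F) : Tendsto (subR H F) atBot atTop := by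
  have hmin : Tendsto (fun p => min (F p) (H p)) atBot atTop := by
    rw [tendsto_atTop]
    intro b
    filter_upwards [tendsto_atTop.1 hFs b, tendsto_atTop.1 hH' b] with x h1 h2
    exact le_min h1 h2
  exact tendsto_atTop_mono (fun p => min_le_subR hFa le_rfl) hmin

lemma subR_idem (hFa : Antitone F) : subR H (subR H F) = subR H F := by
  funext p
  apply le_antisymm
  · exact subR_le_F (subR_anti hFa) p
  · refine csSup_le (subR_nonempty _ _ _) ?_
    rintro x ⟨q, hq, rfl⟩
    calc min (F q) (H q) ≤ min (subR H F q) (H q) :=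
          le_min (min_le_subR hFa le_rfl) (min_le_right _ _)
      _ ≤ subR H (subR H F) p := min_le_subR (subR_anti hFa) hq

end SubRHelpers


section SupRHelpers
variable {H F : ℝ → ℝ}

lemma supR_nonempty (H F : ℝ → ℝ) (p : ℝ) :
    ((fun q => max (F q) (H q)) '' Iic p).Nonempty :=
  ⟨_, ⟨p, self_mem_Iic, rfl⟩⟩

lemma supR_bdd (hFa : Antitone F) (p : ℝ) :
    BddBelow ((fun q => max (F q) (H q)) '' Iic p) := by
  refine ⟨F p, ?_⟩
  rintro x ⟨q, hq, rfl⟩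
  exact (hFa hq).trans (le_max_left _ _)

lemma F_le_supR (hFa : Antitone F) (p : ℝ) : F p ≤ supR H F p := by
  refine le_csInf (supR_nonempty H F p) ?_
  rintro x ⟨q, hq, rfl⟩
  exact (hFa hq).trans (le_max_left _ _)

lemma supR_le_max (hFa : Antitone F) {p q : ℝ} (hq : q ≤ p) :
    supR H F p ≤ max (F q) (H q) :=
  csInf_le (supR_bdd hFa p) ⟨q, hq, rfl⟩

lemma supR_anti (hFa : Antitone F) : Antitone (supR H F) := fun p p' h =>
  csInf_le_csInf (supR_bdd hFa p') (supR_nonempty H F p)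
    (image_mono (Iic_subset_Iic.2 h))

lemma supR_cont (hH : Continuous H) (hF : Continuous F) (hFa : Antitone F) :
    Continuous (supR H F) := by
  have hgc : Continuous fun q => max (F q) (H q) := hF.max hH
  rw [Metric.continuous_iff]
  intro p ε hε
  obtain ⟨δ₁, hδ₁, hg₁⟩ := Metric.continuousAt_iff.1 hgc.continuousAt (ε/4) (by linarith)
  have h₁ : supR H F p - ε/2 ≤ supR H F (p + δ₁/2) := by
    refine le_csInf (supR_nonempty _ _ _) ?_
    rintro x ⟨q, hq, rfl⟩
    rcases le_or_gt q p with h | h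
    · have := supR_le_max (H := H) hFa h
      linarith
    · have hd : dist q p < δ₁ := by
        simp only [mem_Iic] at hq
        rw [Real.dist_eq, abs_lt]; constructor <;> linarith
      have := hg₁ hd
      rw [Real.dist_eq, abs_lt] at this
      have h2 : supR H F p ≤ max (F p) (H p) := supR_le_max hFa le_rfl
      linarith [this.1]
  obtain ⟨x, ⟨qs, hqs, rfl⟩, hx⟩ :=
    exists_lt_of_csInf_lt (supR_nonempty H F p)
      (show supR H F p < supR H F p + ε/4 by linarith)
  obtain ⟨η, hη, hg₂⟩ := Metric.continuousAt_iff.1 (hgc.continuousAt (x := qs)) (ε/4) (by linarith)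
  obtain ⟨q', hq'⟩ : ∃ q', q' = qs - η/2 := ⟨_, rfl⟩
  have hδ₂ : 0 < p - q' := by
    simp only [mem_Iic] at hqs; rw [hq']; linarith
  have h₂ : supR H F q' ≤ supR H F p + ε/2 := by
    have hd : dist q' qs < η := by
      rw [Real.dist_eq, abs_lt]; rw [hq']; constructor <;> linarith
    have := hg₂ hd
    rw [Real.dist_eq, abs_lt] at this
    have h3 : supR H F q' ≤ max (F q') (H q') := supR_le_max hFa le_rfl
    linarith [this.2]
  refine ⟨min (δ₁/2) (p - q'), lt_min (by linarith) hδ₂, fun a ha => ?_⟩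
  rw [Real.dist_eq, abs_lt] at ha
  have ha1 : a ≤ p + δ₁/2 := by
    have := ha.2; have := min_le_left (δ₁/2) (p - q'); linarith
  have ha2 : q' ≤ a := by
    have := ha.1; have := min_le_right (δ₁/2) (p - q'); linarith
  have l1 : supR H F (p + δ₁/2) ≤ supR H F a := supR_anti hFa ha1
  have l2 : supR H F a ≤ supR H F q' := supR_anti hFa ha2
  rw [Real.dist_eq, abs_lt]
  constructor <;> linarith

lemma supR_semi (hFs : Tendsto F atBot atTop) (hFa : Antitone F) :
    Tendsto (supR H F) atBot atTop :=
  tendsto_atTop_mono (fun p => F_le_supR hFa p) hFs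

lemma supR_idem (hFa : Antitone F) : supR H (supR H F) = supR H F := by
  funext p
  apply le_antisymm
  · refine le_csInf (supR_nonempty _ _ _) ?_
    rintro x ⟨q, hq, rfl⟩
    calc supR H (supR H F) p ≤ max (supR H F q) (H q) :=
          supR_le_max (supR_anti hFa) hq
      _ ≤ max (F q) (H q) :=
          max_le (supR_le_max hFa le_rfl) (le_max_right _ _)
  · exact F_le_supR (supR_anti hFa) p

end SupRHelpers

/-- First properties of the operators `R̲` and `R̄`. -/
theorem first_properties_of_relaxations (H F0 : ℝ → ℝ)
    (hH : Continuous H) (hHc : Coercive H)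
    (hF : Continuous F0) (hFa : Antitone F0) (hFs : SemiCoercive F0) :
    (Continuous (subR H F0) ∧ Antitone (subR H F0) ∧ SemiCoercive (subR H F0)) ∧
    (Continuous (supR H F0) ∧ Antitone (supR H F0) ∧ SemiCoercive (supR H F0)) ∧
    (∀ p : ℝ, min (F0 p) (H p) ≤ subR H F0 p ∧ subR H F0 p ≤ F0 p ∧
      F0 p ≤ supR H F0 p ∧ supR H F0 p ≤ max (F0 p) (H p)) ∧
    subR H (subR H F0) = subR H F0 ∧ supR H (supR H F0) = supR H F0 := by
  have hH' : Tendsto H atBot atTop :=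
    hHc.mono_left (by rw [cocompact_eq_atBot_atTop]; exact le_sup_left)
  refine ⟨⟨subR_cont hH hF hFa, subR_anti hFa, subR_semi hH' hFs hFa⟩,
    ⟨supR_cont hH hF hFa, supR_anti hFa, supR_semi hFs hFa⟩,
    fun p => ⟨min_le_subR hFa le_rfl, subR_le_F hFa p, F_le_supR hFa p,
      supR_le_max hFa le_rfl⟩,
    subR_idem hFa, supR_idem hFa⟩
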